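/- Let $G_1,G_2$ be connected graphs and suppose $\delta=[i,j|k,l]=x_{ik}x_{jl}-x_{il}x_{jk}$ is a $2$-minor of $X$ with $i,j\in V(G_1)$ connected by a path in $G_1$ and $k,l\in V(G_2)$ connected by a path in $G_2$. Then there exists $N\geq 0$ such that $x^N\delta\in J_{G_1,G_2}$, where $x=\prod_{i,j}x_{ij}$. -/

import Mathlib

open MvPolynomial

/-- The binomial edge ideal of a pair of graphs. -/
noncomputable def pairIdeal (K : Type) [Field K] {α β : Type}
    (G1 : SimpleGraph α) (G2 : SimpleGraph β) : Ideal (MvPolynomial (α × β) K) :=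
  Ideal.span {p | ∃ i j k l, G1.Adj i j ∧ G2.Adj k l ∧
    p = X (i, k) * X (j, l) - X (i, l) * X (j, k)}

section Aux

variable (K : Type) [Field K] {m n : ℕ}
variable (G1 : SimpleGraph (Fin m)) (G2 : SimpleGraph (Fin n))

/-- The 2-minor `[i,j|k,l]`. -/
noncomputable def dlt (i j : Fin m) (k l : Fin n) : MvPolynomial (Fin m × Fin n) K :=
  X (i, k) * X (j, l) - X (i, l) * X (j, k)

lemma dlt_mem {i j : Fin m} {k l : Fin n} (h1 : G1.Adj i j) (h2 : G2.Adj k l) :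
    dlt K i j k l ∈ pairIdeal K G1 G2 :=
  Ideal.subset_span ⟨i, j, k, l, h1, h2, rfl⟩

/-- Multiplying by the full product promotes membership multiplied by a single variable. -/
lemma promote {q : Fin m × Fin n} {f : MvPolynomial (Fin m × Fin n) K}
    (h : X q * f ∈ pairIdeal K G1 G2) :
    (∏ p : Fin m × Fin n, X p) * f ∈ pairIdeal K G1 G2 := by
  have : (∏ p : Fin m × Fin n, X p) * f
      = (∏ p ∈ Finset.univ.erase q, X p) * (X q * f) := by
    rw [← Finset.mul_prod_erase Finset.univ X (Finset.mem_univ q)]; ring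
  rw [this]
  exact Ideal.mul_mem_left _ _ h

lemma main1 {i j : Fin m} (w : G1.Walk i j) {k l : Fin n} (hkl : G2.Adj k l) :
    ∃ N : ℕ, (∏ p : Fin m × Fin n, X p) ^ N * dlt K i j k l ∈ pairIdeal K G1 G2 := by
  induction w with
  | nil =>
    refine ⟨0, ?_⟩
    rename_i a
    have : dlt K a a k l = 0 := by simp only [dlt]; ring
    simp [this]
  | @cons i p j hip w ih =>
    obtain ⟨N, hN⟩ := ih
    refine ⟨N + 1, ?_⟩
    have key : X (p, k) * ((∏ p : Fin m × Fin n, X p) ^ N * dlt K i j k l)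
        = X (i, k) * ((∏ p : Fin m × Fin n, X p) ^ N * dlt K p j k l)
          + (∏ p : Fin m × Fin n, X p) ^ N * X (j, k) * dlt K i p k l := by
      simp only [dlt]; ring
    have hmem : X (p, k) * ((∏ p : Fin m × Fin n, X p) ^ N * dlt K i j k l)
        ∈ pairIdeal K G1 G2 := by
      rw [key]
      exact Ideal.add_mem _ (Ideal.mul_mem_left _ _ hN)
        (Ideal.mul_mem_left _ _ (dlt_mem K G1 G2 hip hkl))
    have := promote K G1 G2 hmem
    rw [pow_succ]
    convert this using 1
    ring

lemma main2 {i j : Fin m} (hij : G1.Reachable i j) {k l : Fin n} (w : G2.Walk k l) :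
    ∃ N : ℕ, (∏ p : Fin m × Fin n, X p) ^ N * dlt K i j k l ∈ pairIdeal K G1 G2 := by
  induction w with
  | nil =>
    refine ⟨0, ?_⟩
    rename_i a
    have : dlt K i j a a = 0 := by simp [dlt]
    simp [this]
  | @cons k q l hkq w ih =>
    obtain ⟨N, hN⟩ := ih
    obtain ⟨w1⟩ := hij
    obtain ⟨M, hM⟩ := main1 K G1 G2 w1 hkq
    refine ⟨N + M + 1, ?_⟩
    have key : X (i, q) * ((∏ p : Fin m × Fin n, X p) ^ (N + M) * dlt K i j k l)
        = X (i, k) * ((∏ p : Fin m × Fin n, X p) ^ M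
            * ((∏ p : Fin m × Fin n, X p) ^ N * dlt K i j q l))
          + X (i, l) * ((∏ p : Fin m × Fin n, X p) ^ N
            * ((∏ p : Fin m × Fin n, X p) ^ M * dlt K i j k q)) := by
      simp only [dlt]; ring
    have hmem : X (i, q) * ((∏ p : Fin m × Fin n, X p) ^ (N + M) * dlt K i j k l)
        ∈ pairIdeal K G1 G2 := by
      rw [key]
      exact Ideal.add_mem _ (Ideal.mul_mem_left _ _ (Ideal.mul_mem_left _ _ hN))
        (Ideal.mul_mem_left _ _ (Ideal.mul_mem_left _ _ hM))
    have := promote K G1 G2 hmem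
    rw [pow_succ]
    convert this using 1
    ring

end Aux

/-- If `i` and `j` are joined by a path in `G₁` and `k` and `l` are joined by a path
in `G₂`, then some power of the product `x` of all variables multiplies the minor
`δ = [i,j|k,l]` into `J_{G₁,G₂}`. -/
theorem stmt5 (K : Type) [Field K] (m n : ℕ)
    (G1 : SimpleGraph (Fin m)) (G2 : SimpleGraph (Fin n))
    (h1 : G1.Connected) (h2 : G2.Connected)
    (i j : Fin m) (k l : Fin n) (hij : G1.Reachable i j) (hkl : G2.Reachable k l) :
    ∃ N : ℕ, (∏ p : Fin m × Fin n, X p) ^ N *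
        (X (i, k) * X (j, l) - X (i, l) * X (j, k) : MvPolynomial (Fin m × Fin n) K) ∈
      pairIdeal K G1 G2 := by
  obtain ⟨w⟩ := hkl
  exact main2 K G1 G2 hij w
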